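/- If {e'_i} is another orthonormal basis with e'_i = U e_i for a unitary U, then ω'_ρ = (UθU*θ ⊗ I) ω_ρ (UθU*θ ⊗ I)*, where ω_ρ, ω'_ρ are the states on h ⊗ h built from the two bases and θ is the conjugation w.r.t. {e_i}. -/

import Mathlib

open scoped InnerProductSpace

set_option maxHeartbeats 2000000

lemma aux_summable_smul {ι κ K : Type*} [NormedAddCommGroup K] [NormedSpace ℂ K]
    [CompleteSpace K] {f : ι → ℂ} {g : κ → K}
    (hfabs : Summable fun j => ‖f j‖) (hg : Summable g) :
    Summable (fun z : ι × κ => f z.1 • g z.2) := by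
  classical
  rw [summable_iff_vanishing]
  intro V hV
  obtain ⟨ε, hε, hball⟩ := Metric.mem_nhds_iff.mp hV
  -- tail control for g
  have hgv := summable_iff_vanishing.mp hg
  set F : ℝ := ∑' j, ‖f j‖ with hF
  have hF0 : (0:ℝ) ≤ F := tsum_nonneg fun j => norm_nonneg _
  set δ : ℝ := ε / (4 * (F + 1)) with hδ
  have hδ0 : 0 < δ := by positivity
  obtain ⟨s₂, hs₂⟩ := hgv (Metric.ball 0 δ) (Metric.ball_mem_nhds 0 hδ0)
  have hs₂' : ∀ u : Finset κ, Disjoint u s₂ → ‖∑ i ∈ u, g i‖ ≤ δ := by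
    intro u hu
    have h' : ‖∑ i ∈ u, g i‖ < δ := by
      simpa [Metric.mem_ball, dist_eq_norm] using hs₂ u hu
    exact h'.le
  set B : ℝ := (∑ i ∈ s₂, ‖g i‖) + δ with hB
  have hB0 : 0 < B := by
    have : (0:ℝ) ≤ ∑ i ∈ s₂, ‖g i‖ := Finset.sum_nonneg fun i _ => norm_nonneg _
    linarith
  have hBbound : ∀ u : Finset κ, ‖∑ i ∈ u, g i‖ ≤ B := by
    intro u
    have h1 : ∑ i ∈ u, g i = (∑ i ∈ u ∩ s₂, g i) + ∑ i ∈ u \ s₂, g i :=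
      (Finset.sum_inter_add_sum_sdiff u s₂ g).symm
    rw [h1]
    refine (norm_add_le _ _).trans ?_
    have h2 : ‖∑ i ∈ u ∩ s₂, g i‖ ≤ ∑ i ∈ s₂, ‖g i‖ := by
      refine (norm_sum_le _ _).trans ?_
      exact Finset.sum_le_sum_of_subset_of_nonneg (Finset.inter_subset_right)
        (fun i _ _ => norm_nonneg _)
    have h3 : ‖∑ i ∈ u \ s₂, g i‖ ≤ δ := hs₂' _ (Finset.sdiff_disjoint)
    simp only [hB]; linarith
  -- tail control for f
  have hfv := summable_iff_vanishing.mp hfabs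
  have hεB : 0 < ε / (2 * B) := by positivity
  obtain ⟨s₁, hs₁⟩ := hfv (Metric.ball 0 (ε / (2*B))) (Metric.ball_mem_nhds 0 hεB)
  have hs₁' : ∀ w : Finset ι, Disjoint w s₁ → ∑ j ∈ w, ‖f j‖ ≤ ε / (2*B) := by
    intro w hw
    have := hs₁ w hw
    have h' : |∑ j ∈ w, ‖f j‖| < ε / (2*B) := by
      simpa [Metric.mem_ball, dist_eq_norm, Real.norm_eq_abs] using this
    calc ∑ j ∈ w, ‖f j‖ ≤ |∑ j ∈ w, ‖f j‖| := le_abs_self _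
    _ ≤ ε / (2*B) := h'.le
  refine ⟨s₁ ×ˢ s₂, fun t ht => ?_⟩
  apply hball
  simp only [Metric.mem_ball, dist_eq_norm, sub_zero]
  -- decompose the sum fiberwise over first coordinates
  set J : Finset ι := t.image Prod.fst with hJ
  have hdec : ∑ p ∈ t, f p.1 • g p.2
      = ∑ j ∈ J, ∑ p ∈ t.filter (fun p => p.1 = j), f p.1 • g p.2 := by
    exact (Finset.sum_fiberwise_of_maps_to (fun p hp => Finset.mem_image_of_mem Prod.fst hp) _).symm
  have hfiber : ∀ j, ∑ p ∈ t.filter (fun p => p.1 = j), f p.1 • g p.2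
      = f j • ∑ i ∈ (t.filter (fun p => p.1 = j)).image Prod.snd, g i := by
    intro j
    rw [Finset.smul_sum, Finset.sum_image ?inj]
    · refine Finset.sum_congr rfl fun p hp => ?_
      have : p.1 = j := (Finset.mem_filter.mp hp).2
      rw [this]
    · intro p hp q hq hpq
      have h1 : p.1 = j := (Finset.mem_filter.mp hp).2
      have h2 : q.1 = j := (Finset.mem_filter.mp hq).2
      exact Prod.ext (h1.trans h2.symm) hpq
  set S : ι → K := fun j => ∑ i ∈ (t.filter (fun p => p.1 = j)).image Prod.snd, g i with hS
  have hdisj : ∀ j ∈ s₁, Disjoint ((t.filter (fun p => p.1 = j)).image Prod.snd) s₂ := by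
    intro j hj
    rw [Finset.disjoint_left]
    intro i hi his₂
    obtain ⟨p, hp, hpi⟩ := Finset.mem_image.mp hi
    have hpt := (Finset.mem_filter.mp hp).1
    have hpj : p.1 = j := (Finset.mem_filter.mp hp).2
    have : p ∈ s₁ ×ˢ s₂ := Finset.mem_product.mpr ⟨hpj ▸ hj, hpi ▸ his₂⟩
    exact (Finset.disjoint_left.mp ht hpt) this
  have hSsmall : ∀ j ∈ s₁, ‖S j‖ ≤ δ := fun j hj => hs₂' _ (hdisj j hj)
  have hSB : ∀ j, ‖S j‖ ≤ B := fun j => hBbound _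
  have key : ‖∑ p ∈ t, f p.1 • g p.2‖ ≤ ∑ j ∈ J, ‖f j‖ * ‖S j‖ := by
    rw [hdec]
    have : ∀ j ∈ J, ∑ p ∈ t.filter (fun p => p.1 = j), f p.1 • g p.2 = f j • S j :=
      fun j _ => hfiber j
    rw [Finset.sum_congr rfl this]
    refine (norm_sum_le _ _).trans ?_
    refine Finset.sum_le_sum fun j _ => ?_
    rw [norm_smul]
  have hsplit : ∑ j ∈ J, ‖f j‖ * ‖S j‖
      = (∑ j ∈ J ∩ s₁, ‖f j‖ * ‖S j‖) + ∑ j ∈ J \ s₁, ‖f j‖ * ‖S j‖ :=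
    (Finset.sum_inter_add_sum_sdiff J s₁ _).symm
  have h1 : ∑ j ∈ J ∩ s₁, ‖f j‖ * ‖S j‖ ≤ F * δ := by
    calc ∑ j ∈ J ∩ s₁, ‖f j‖ * ‖S j‖ ≤ ∑ j ∈ J ∩ s₁, ‖f j‖ * δ := by
          refine Finset.sum_le_sum fun j hj => ?_
          exact mul_le_mul_of_nonneg_left (hSsmall j (Finset.mem_inter.mp hj).2) (norm_nonneg _)
      _ = (∑ j ∈ J ∩ s₁, ‖f j‖) * δ := by rw [Finset.sum_mul]
      _ ≤ F * δ := by
          refine mul_le_mul_of_nonneg_right ?_ hδ0.le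
          exact Summable.sum_le_tsum _ (fun j _ => norm_nonneg _) hfabs
  have h2 : ∑ j ∈ J \ s₁, ‖f j‖ * ‖S j‖ ≤ (ε / (2*B)) * B := by
    calc ∑ j ∈ J \ s₁, ‖f j‖ * ‖S j‖ ≤ ∑ j ∈ J \ s₁, ‖f j‖ * B := by
          refine Finset.sum_le_sum fun j _ => ?_
          exact mul_le_mul_of_nonneg_left (hSB j) (norm_nonneg _)
      _ = (∑ j ∈ J \ s₁, ‖f j‖) * B := by rw [Finset.sum_mul]
      _ ≤ (ε / (2*B)) * B := by
          exact mul_le_mul_of_nonneg_right (hs₁' _ Finset.sdiff_disjoint) hB0.le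
  have hFδ : F * δ ≤ ε / 4 := by
    have h : F * δ ≤ (F + 1) * δ := mul_le_mul_of_nonneg_right (by linarith) hδ0.le
    have h' : (F + 1) * δ = ε / 4 := by
      rw [hδ]; field_simp
    linarith
  have hεB2 : (ε / (2*B)) * B = ε / 2 := by
    field_simp
  linarith [key, hsplit, h1, h2]

lemma aux_hasSum_smul {ι κ K : Type*} [NormedAddCommGroup K] [NormedSpace ℂ K]
    [CompleteSpace K] {f : ι → ℂ} {g : κ → K} {s : ℂ} {t : K}
    (hfabs : Summable fun j => ‖f j‖) (hf : HasSum f s) (hg : HasSum g t) :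
    HasSum (fun z : ι × κ => f z.1 • g z.2) (s • t) := by
  have hsumm : Summable (fun z : ι × κ => f z.1 • g z.2) :=
    aux_summable_smul hfabs hg.summable
  have htsum : ∑' z : ι × κ, f z.1 • g z.2 = s • t := by
    rw [Summable.tsum_prod hsumm]
    have h1 : ∀ j : ι, ∑' i : κ, f j • g i = f j • t := fun j =>
      ((hg.const_smul (f j)).tsum_eq)
    rw [tsum_congr h1]
    exact (hf.smul_const t).tsum_eq
  exact htsum ▸ hsumm.hasSum

lemma aux_summable_orth {ι K : Type*} [NormedAddCommGroup K] [InnerProductSpace ℂ K]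
    [CompleteSpace K] {A : ι → K}
    (horth : ∀ i j, i ≠ j → ⟪A i, A j⟫_ℂ = 0)
    (hsum : Summable fun i => ‖A i‖ ^ 2) : Summable A := by
  have hofam : OrthogonalFamily ℂ (fun i => (ℂ ∙ A i : Submodule ℂ K))
      (fun i => (ℂ ∙ A i).subtypeₗᵢ) := by
    intro i j hij x y
    obtain ⟨c, hc⟩ := Submodule.mem_span_singleton.mp x.2
    obtain ⟨d, hd⟩ := Submodule.mem_span_singleton.mp y.2
    have hxy : ⟪(x : K), (y : K)⟫_ℂ = 0 := by
      rw [← hc, ← hd, inner_smul_left, inner_smul_right, horth i j hij]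
      ring
    simpa using hxy
  have := (hofam.summable_iff_norm_sq_summable
    (fun i => (⟨A i, Submodule.mem_span_singleton_self _⟩ : (ℂ ∙ A i : Submodule ℂ K)))).mpr ?_
  · simpa using this
  · simpa using hsum

lemma aux_parseval_norm {ι H : Type*} [NormedAddCommGroup H] [InnerProductSpace ℂ H]
    (e : HilbertBasis ι ℂ H) (x : H) :
    HasSum (fun i => ‖⟪e i, x⟫_ℂ‖ ^ 2) (‖x‖ ^ 2) := by
  have h := e.hasSum_inner_mul_inner x x
  have h2 : ∀ i, ⟪x, e i⟫_ℂ * ⟪e i, x⟫_ℂ = ((‖⟪e i, x⟫_ℂ‖ ^ 2 : ℝ) : ℂ) := by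
    intro i
    rw [← inner_conj_symm (e i) x, RCLike.mul_conj, RCLike.norm_conj]
    push_cast
    rfl
  rw [show ⟪x, x⟫_ℂ = ((‖x‖ ^ 2 : ℝ) : ℂ) by
    rw [inner_self_eq_norm_sq_to_K]; norm_cast] at h
  rw [funext h2] at h
  exact (Complex.hasSum_ofReal).mp h

lemma aux_hasSum_smul' {ι κ K : Type*} [NormedAddCommGroup K] [NormedSpace ℂ K]
    [CompleteSpace K] {f : ι → ℂ} {g : κ → K} {s : ℂ} {t : K}
    (hfabs : Summable fun j => ‖f j‖) (hf : HasSum f s) (hg : HasSum g t) :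
    HasSum (fun z : κ × ι => f z.2 • g z.1) (s • t) :=
  ((Equiv.prodComm κ ι).hasSum_iff).mpr (aux_hasSum_smul hfabs hf hg)

/-- If `{e'_i}` is another orthonormal basis with `e'_i = U e_i` for a unitary `U`, then
`ω'_ρ = (UθU*θ ⊗ I) ω_ρ (UθU*θ ⊗ I)*`, where `ω_ρ`, `ω'_ρ` are the states on `h ⊗ h`
built from the two bases and `θ` is the conjugation w.r.t. `{e_i}` (so `U* = U⁻¹`). -/
theorem omega_rho_change_of_basis
    {H : Type*} [NormedAddCommGroup H] [InnerProductSpace ℂ H] [CompleteSpace H]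
    {K : Type*} [NormedAddCommGroup K] [InnerProductSpace ℂ K] [CompleteSpace K]
    (tp : H →ₗ[ℂ] H →ₗ[ℂ] K)
    (htp : ∀ u v u' v' : H, ⟪tp u v, tp u' v'⟫_ℂ = ⟪u, u'⟫_ℂ * ⟪v, v'⟫_ℂ)
    (hdense : (Submodule.span ℂ
        (Set.range fun uv : H × H => tp uv.1 uv.2)).topologicalClosure = ⊤)
    {ι : Type*} (e : HilbertBasis ι ℂ H)
    (θ : H → H)
    (hadd : ∀ u v : H, θ (u + v) = θ u + θ v)
    (hsmul : ∀ (c : ℂ) (u : H), θ (c • u) = (starRingEnd ℂ c) • θ u)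
    (hinner : ∀ u v : H, ⟪θ u, θ v⟫_ℂ = ⟪v, u⟫_ℂ)
    (hθe : ∀ i : ι, θ (e i) = e i)
    (ρ sq : H →L[ℂ] H) (hρ : ρ.IsPositive)
    (hρtr : HasSum (fun i : ι => ⟪e i, ρ (e i)⟫_ℂ) 1)
    (hsqpos : sq.IsPositive) (hsq : sq ∘L sq = ρ)
    (U : H ≃ₗᵢ[ℂ] H)
    (Wω W'ω : K →L[ℂ] K)
    (hWω : ∀ u v : H, Wω (tp u v)
      = ∑' ij : ι × ι, (⟪e ij.2, u⟫_ℂ * ⟪sq (e ij.2), v⟫_ℂ) •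
          tp (e ij.1) (sq (e ij.1)))
    (hW'ω : ∀ u v : H, W'ω (tp u v)
      = ∑' ij : ι × ι, (⟪U (e ij.2), u⟫_ℂ * ⟪sq (U (e ij.2)), v⟫_ℂ) •
          tp (U (e ij.1)) (sq (U (e ij.1))))
    (VK : K →L[ℂ] K)
    (hVK : ∀ u v : H, VK (tp u v) = tp (U (θ (U.symm (θ u)))) v) :
    W'ω = VK ∘L Wω ∘L (ContinuousLinearMap.adjoint VK) := by
  classical
  -- basic symmetric operator facts
  have hsym : ∀ x y : H, ⟪sq x, y⟫_ℂ = ⟪x, sq y⟫_ℂ := fun x y => hsqpos.1 x y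
  -- θ ∘ θ = id
  have hθinner : ∀ (i : ι) (x : H), ⟪e i, θ x⟫_ℂ = ⟪x, e i⟫_ℂ := by
    intro i x
    calc ⟪e i, θ x⟫_ℂ = ⟪θ (e i), θ x⟫_ℂ := by rw [hθe]
      _ = ⟪x, e i⟫_ℂ := hinner _ _
  have hθθ : ∀ x : H, θ (θ x) = x := by
    intro x
    apply e.repr.injective
    ext i
    rw [e.repr_apply_apply, e.repr_apply_apply]
    rw [hθinner i (θ x), ← inner_conj_symm (e i) x, ← hθinner i x]
    exact (inner_conj_symm _ _).symm
  have hθswap : ∀ x y : H, ⟪x, θ y⟫_ℂ = ⟪y, θ x⟫_ℂ := by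
    intro x y
    calc ⟪x, θ y⟫_ℂ = ⟪θ (θ x), θ y⟫_ℂ := by rw [hθθ]
      _ = ⟪y, θ x⟫_ℂ := hinner _ _
  have hU : ∀ x y : H, ⟪x, U y⟫_ℂ = ⟪U.symm x, y⟫_ℂ := by
    intro x y
    rw [← U.inner_map_map (U.symm x) y, U.apply_symm_apply]
  have hUsymm : ∀ x y : H, ⟪U.symm x, y⟫_ℂ = ⟪x, U y⟫_ℂ := fun x y => (hU x y).symm
  -- the second orthonormal family
  set e' : ι → H := fun i => U (e i) with he'
  have horth : Orthonormal ℂ (fun i => e i) := e.orthonormal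
  have horth' : Orthonormal ℂ e' := by
    rw [orthonormal_iff_ite] at horth ⊢
    intro i j
    rw [he']
    simp only [U.inner_map_map]
    exact horth i j
  -- norm of elementary tensors
  have htpnorm : ∀ u v : H, ‖tp u v‖ = ‖u‖ * ‖v‖ := by
    intro u v
    have h := htp u v u v
    rw [inner_self_eq_norm_sq_to_K, inner_self_eq_norm_sq_to_K, inner_self_eq_norm_sq_to_K] at h
    have hr : ‖tp u v‖ ^ 2 = (‖u‖ * ‖v‖) ^ 2 := by
      have := h
      push_cast at this
      exact_mod_cast by
        rw [mul_pow]
        exact_mod_cast this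
    have h0 : (0:ℝ) ≤ ‖u‖ * ‖v‖ := by positivity
    calc ‖tp u v‖ = √(‖tp u v‖ ^ 2) := (Real.sqrt_sq (norm_nonneg _)).symm
      _ = √((‖u‖ * ‖v‖) ^ 2) := by rw [hr]
      _ = ‖u‖ * ‖v‖ := Real.sqrt_sq h0
  -- absolute summability of coefficients
  have habs : ∀ (f : ι → H), Orthonormal ℂ f → ∀ u v : H,
      Summable (fun j => ‖⟪f j, u⟫_ℂ * ⟪sq (f j), v⟫_ℂ‖) := by
    intro f hf u v
    have h1 := hf.inner_products_summable (x := u)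
    have h2 := hf.inner_products_summable (x := sq v)
    refine Summable.of_nonneg_of_le (fun j => norm_nonneg _) (fun j => ?_)
      (((h1.add h2).mul_left (1/2)))
    have hs : ⟪sq (f j), v⟫_ℂ = ⟪f j, sq v⟫_ℂ := hsym _ _
    rw [norm_mul, hs]
    nlinarith [sq_nonneg (‖⟪f j, u⟫_ℂ‖ - ‖⟪f j, sq v⟫_ℂ‖), norm_nonneg ⟪f j, u⟫_ℂ,
      norm_nonneg ⟪f j, sq v⟫_ℂ]
  -- ⟪x, ρ x⟫ = ‖sq x‖²
  have hρnorm : ∀ x : H, ⟪x, ρ x⟫_ℂ = ((‖sq x‖ ^ 2 : ℝ) : ℂ) := by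
    intro x
    have : ρ x = sq (sq x) := by rw [← hsq]; rfl
    rw [this, ← hsym, inner_self_eq_norm_sq_to_K]
    norm_cast
  -- summability of ‖sq (e i)‖²
  have hsqsum : Summable (fun i => ‖sq (e i)‖ ^ 2) := by
    have h := hρtr
    simp_rw [hρnorm] at h
    exact (Complex.hasSum_ofReal.mp h).summable
  -- summability of ‖sq (e' i)‖² via Fubini
  have hsqsum' : Summable (fun i => ‖sq (e' i)‖ ^ 2) := by
    set F : ι × ι → ℝ := fun z => ‖⟪e z.1, sq (e' z.2)⟫_ℂ‖ ^ 2 with hF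
    have hF0 : 0 ≤ F := fun z => by positivity
    have hFsymm : ∀ j i : ι, F (j, i) = ‖⟪e' i, sq (e j)⟫_ℂ‖ ^ 2 := by
      intro j i
      rw [hF]
      simp only
      rw [← hsym, norm_inner_symm]
    have hsummable : Summable F := by
      rw [summable_prod_of_nonneg hF0]
      constructor
      · intro j
        have := horth'.inner_products_summable (x := sq (e j))
        refine this.congr fun i => ?_
        rw [hFsymm]
      · refine Summable.of_nonneg_of_le (fun j => tsum_nonneg fun i => hF0 _)
          (fun j => ?_) hsqsum
        have hle := horth'.tsum_inner_products_le (x := sq (e j))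
        calc ∑' i, F (j, i) = ∑' i, ‖⟪e' i, sq (e j)⟫_ℂ‖ ^ 2 :=
              tsum_congr fun i => hFsymm j i
          _ ≤ ‖sq (e j)‖ ^ 2 := hle
    have hswap : Summable (fun z : ι × ι => F (z.2, z.1)) := by
      have := (Equiv.prodComm ι ι).summable_iff.mpr hsummable
      refine this.congr fun z => ?_
      rfl
    have h2 := (summable_prod_of_nonneg
      (f := fun z : ι × ι => F (z.2, z.1)) (fun z => hF0 (z.2, z.1))).mp hswap
    refine h2.2.congr fun i => ?_
    calc ∑' j, F (j, i) = ∑' j, ‖⟪e j, sq (e' i)⟫_ℂ‖ ^ 2 := rfl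
      _ = ‖sq (e' i)‖ ^ 2 := (aux_parseval_norm e (sq (e' i))).tsum_eq
  -- orthogonality of the Ω-summands
  have horthA : ∀ (f : ι → H), Orthonormal ℂ f →
      ∀ i j, i ≠ j → ⟪tp (f i) (sq (f i)), tp (f j) (sq (f j))⟫_ℂ = 0 := by
    intro f hf i j hij
    rw [htp]
    have := orthonormal_iff_ite.mp hf i j
    rw [this]
    simp [hij]
  have hsummA : ∀ (f : ι → H), Orthonormal ℂ f → Summable (fun i => ‖sq (f i)‖ ^ 2) →
      Summable (fun i => tp (f i) (sq (f i))) := by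
    intro f hf hs
    apply aux_summable_orth (horthA f hf)
    refine hs.congr fun i => ?_
    rw [htpnorm, hf.1 i, one_mul]
  have hA := hsummA (fun i => e i) horth hsqsum
  have hA' := hsummA e' horth' hsqsum'
  set Ω : K := ∑' i, tp (e i) (sq (e i)) with hΩdef
  have hΩ : HasSum (fun i => tp (e i) (sq (e i))) Ω := hA.hasSum
  set Ω' : K := ∑' i, tp (e' i) (sq (e' i)) with hΩ'def
  have hΩ' : HasSum (fun i => tp (e' i) (sq (e' i))) Ω' := hA'.hasSum
  have hDense : Dense (Submodule.span ℂ (Set.range fun uv : H × H => tp uv.1 uv.2) : Set K) :=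
    Submodule.dense_iff_topologicalClosure_eq_top.mpr hdense
  -- rank-one form of the W operators
  have hrank : ∀ (f : ι → H), Orthonormal ℂ f →
      ∀ (W : K →L[ℂ] K) (Λ : K), HasSum (fun i => tp (f i) (sq (f i))) Λ →
      (∀ u v : H, W (tp u v) = ∑' ij : ι × ι,
        (⟪f ij.2, u⟫_ℂ * ⟪sq (f ij.2), v⟫_ℂ) • tp (f ij.1) (sq (f ij.1))) →
      W = (innerSL ℂ Λ).smulRight Λ := by
    intro f hf W Λ hΛ hW
    refine ContinuousLinearMap.ext_on hDense ?_
    rintro x ⟨⟨u, v⟩, rfl⟩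
    show W (tp u v) = ((innerSL ℂ Λ).smulRight Λ) (tp u v)
    rw [hW u v]
    have hc : HasSum (fun j => ⟪tp (f j) (sq (f j)), tp u v⟫_ℂ) ⟪Λ, tp u v⟫_ℂ := by
      have h0 : HasSum (fun j => ⟪tp u v, tp (f j) (sq (f j))⟫_ℂ) ⟪tp u v, Λ⟫_ℂ :=
        hΛ.mapL (innerSL ℂ (tp u v))
      have h1 := h0.star
      have e1 : (fun j => star ⟪tp u v, tp (f j) (sq (f j))⟫_ℂ)
          = fun j => ⟪tp (f j) (sq (f j)), tp u v⟫_ℂ := by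
        funext j
        exact inner_conj_symm _ _
      have e2 : star ⟪tp u v, Λ⟫_ℂ = ⟪Λ, tp u v⟫_ℂ := inner_conj_symm _ _
      rw [e1, e2] at h1
      exact h1
    have habs' : Summable (fun j => ‖⟪tp (f j) (sq (f j)), tp u v⟫_ℂ‖) := by
      refine (habs f hf u v).congr fun j => ?_
      rw [htp]
    have hswap : HasSum (fun ij : ι × ι =>
        ⟪tp (f ij.2) (sq (f ij.2)), tp u v⟫_ℂ • tp (f ij.1) (sq (f ij.1)))
        (⟪Λ, tp u v⟫_ℂ • Λ) := aux_hasSum_smul' habs' hc hΛ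
    have ht : (fun ij : ι × ι =>
          (⟪f ij.2, u⟫_ℂ * ⟪sq (f ij.2), v⟫_ℂ) • tp (f ij.1) (sq (f ij.1)))
        = fun ij : ι × ι =>
          ⟪tp (f ij.2) (sq (f ij.2)), tp u v⟫_ℂ • tp (f ij.1) (sq (f ij.1)) :=
      funext fun ij => by rw [htp]
    rw [ht, hswap.tsum_eq]
    simp [ContinuousLinearMap.smulRight_apply]
  have hWrank := hrank (fun i => e i) horth Wω Ω hΩ hWω
  have hW'rank := hrank e' horth' W'ω Ω' hΩ' hW'ω
  -- VK Ω = Ω'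
  have hVKΩsum : HasSum (fun i => tp (U (θ (U.symm (e i)))) (sq (e i))) (VK Ω) := by
    have h := hΩ.mapL VK
    have heq : (fun i => VK (tp (e i) (sq (e i))))
        = fun i => tp (U (θ (U.symm (e i)))) (sq (e i)) :=
      funext fun i => by rw [hVK, hθe]
    rwa [heq] at h
  have hkey : ∀ a b : H, ⟪tp a b, VK Ω⟫_ℂ = ⟪tp a b, Ω'⟫_ℂ := by
    intro a b
    have h1 : HasSum (fun i => ⟪tp a b, tp (U (θ (U.symm (e i)))) (sq (e i))⟫_ℂ)
        ⟪tp a b, VK Ω⟫_ℂ := hVKΩsum.mapL (innerSL ℂ (tp a b))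
    have h2 : HasSum (fun i => ⟪tp a b, tp (e' i) (sq (e' i))⟫_ℂ) ⟪tp a b, Ω'⟫_ℂ :=
      hΩ'.mapL (innerSL ℂ (tp a b))
    have hp1 : HasSum (fun i => ⟪sq b, e i⟫_ℂ * ⟪e i, U (θ (U.symm a))⟫_ℂ)
        ⟪sq b, U (θ (U.symm a))⟫_ℂ := e.hasSum_inner_mul_inner _ _
    have hp2 : HasSum (fun i => ⟪U.symm (sq b), e i⟫_ℂ * ⟪e i, θ (U.symm a)⟫_ℂ)
        ⟪U.symm (sq b), θ (U.symm a)⟫_ℂ := e.hasSum_inner_mul_inner _ _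
    have hv : ⟪U.symm (sq b), θ (U.symm a)⟫_ℂ = ⟪sq b, U (θ (U.symm a))⟫_ℂ := hUsymm _ _
    have ht1 : (fun i => ⟪tp a b, tp (U (θ (U.symm (e i)))) (sq (e i))⟫_ℂ)
        = fun i => ⟪sq b, e i⟫_ℂ * ⟪e i, U (θ (U.symm a))⟫_ℂ := by
      funext i
      rw [htp]
      have hb : ⟪b, sq (e i)⟫_ℂ = ⟪sq b, e i⟫_ℂ := (hsym b (e i)).symm
      have ha : ⟪a, U (θ (U.symm (e i)))⟫_ℂ = ⟪e i, U (θ (U.symm a))⟫_ℂ := by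
        rw [hU, hθswap, hUsymm]
      rw [ha, hb]
      ring
    have ht2 : (fun i => ⟪tp a b, tp (e' i) (sq (e' i))⟫_ℂ)
        = fun i => ⟪U.symm (sq b), e i⟫_ℂ * ⟪e i, θ (U.symm a)⟫_ℂ := by
      funext i
      rw [htp]
      have hb : ⟪b, sq (e' i)⟫_ℂ = ⟪U.symm (sq b), e i⟫_ℂ := by
        rw [← hsym]
        simp only [he']
        rw [hU]
      have ha : ⟪a, e' i⟫_ℂ = ⟪e i, θ (U.symm a)⟫_ℂ := by
        simp only [he']
        rw [hU]
        exact (hθinner i (U.symm a)).symm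
      rw [ha, hb]
      ring
    rw [ht1] at h1
    rw [ht2] at h2
    rw [h1.unique hp1, h2.unique hp2, hv]
  have hVKΩ : VK Ω = Ω' := by
    have hz : ∀ x ∈ (Set.range fun uv : H × H => tp uv.1 uv.2),
        (innerSL ℂ (VK Ω - Ω')) x = (0 : K →L[ℂ] ℂ) x := by
      rintro x ⟨⟨a, b⟩, rfl⟩
      show ⟪VK Ω - Ω', tp a b⟫_ℂ = 0
      rw [inner_sub_left]
      have h1 : ⟪VK Ω, tp a b⟫_ℂ = ⟪Ω', tp a b⟫_ℂ := by
        calc ⟪VK Ω, tp a b⟫_ℂ = star ⟪tp a b, VK Ω⟫_ℂ := (inner_conj_symm _ _).symm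
          _ = star ⟪tp a b, Ω'⟫_ℂ := by rw [hkey a b]
          _ = ⟪Ω', tp a b⟫_ℂ := inner_conj_symm _ _
      rw [h1, sub_self]
    have h0 := ContinuousLinearMap.ext_on hDense hz
    have hself : ⟪VK Ω - Ω', VK Ω - Ω'⟫_ℂ = 0 := by
      have h1 : (innerSL ℂ (VK Ω - Ω')) (VK Ω - Ω') = 0 := by rw [h0]; rfl
      exact h1
    rwa [inner_self_eq_zero, sub_eq_zero] at hself
  -- conclusion
  rw [hWrank, hW'rank]
  ext x
  simp only [ContinuousLinearMap.comp_apply, ContinuousLinearMap.smulRight_apply,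
    innerSL_apply_apply, map_smul]
  rw [ContinuousLinearMap.adjoint_inner_right, hVKΩ]
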